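/- Let $Y$ be a random variable, $Z$ a random variable independent of $Y$, and $F$ a measurable function with $X = F(Z, Y) \in L^2$. Let $(Z_k)_{k \ge 1}$ be i.i.d. copies of $Z$ independent of $Y$, and let $f : \mathbb{R} \to \mathbb{R}$ be Lipschitz with constant $[f]_{\mathrm{Lip}}$. Then for every integer $K \ge 1$, $\left\| f\left(\E[X\,|\,Y]\right) - f\left(\frac{1}{K}\sum_{k=1}^K F(Z_k, Y)\right) \right\|_2^2 \le \frac{[f]_{\mathrm{Lip}}^2}{K}\left(\|X\|_2^2 - \|\E[X\,|\,Y]\|_2^2\right)$. -/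

import Mathlib

open Finset MeasureTheory ProbabilityTheory

private lemma mul_int_of_memL2 {α : Type*} [MeasurableSpace α] {μ : Measure α} {f g : α → ℝ}
    (hf : MemLp f 2 μ) (hg : MemLp g 2 μ) : Integrable (fun x => f x * g x) μ := by
  refine Integrable.mono' ((hf.integrable_sq.add hg.integrable_sq).div_const 2)
    (hf.aestronglyMeasurable.mul hg.aestronglyMeasurable) ?_
  filter_upwards with x
  simp only [Pi.add_apply]
  rw [Real.norm_eq_abs, abs_mul]
  nlinarith [sq_nonneg (|f x| - |g x|), sq_abs (f x), sq_abs (g x), abs_nonneg (f x),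
    abs_nonneg (g x)]

private lemma sq_integral_le {α : Type*} [MeasurableSpace α] {μ : Measure α}
    [IsProbabilityMeasure μ] {f : α → ℝ} (hf : MemLp f 2 μ) :
    (∫ x, f x ∂μ) ^ 2 ≤ ∫ x, f x ^ 2 ∂μ := by
  set c := ∫ x, f x ∂μ with hc
  have h1 : Integrable f μ := hf.integrable one_le_two
  have h2 : Integrable (fun x => f x ^ 2) μ := hf.integrable_sq
  have h0 : 0 ≤ ∫ x, (f x - c) ^ 2 ∂μ := integral_nonneg fun x => sq_nonneg _
  have hexp : ∫ x, (f x - c) ^ 2 ∂μ = (∫ x, f x ^ 2 ∂μ) - 2 * c * c + c ^ 2 := by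
    have h : ∀ x, (f x - c) ^ 2 = f x ^ 2 - 2 * c * f x + c ^ 2 := fun x => by ring
    simp_rw [h]
    have hint : Integrable (fun x => f x ^ 2 - 2 * c * f x) μ := h2.sub (h1.const_mul (2 * c))
    have hcm : Integrable (fun x => 2 * c * f x) μ := h1.const_mul (2 * c)
    rw [integral_add hint (integrable_const _), integral_sub h2 hcm,
      integral_const_mul, integral_const]
    simp [← hc]
    try ring
  nlinarith [h0, hexp]

theorem nested_strong_error {Ω : Type*} [MeasureSpace Ω]
    [IsProbabilityMeasure (ℙ : Measure Ω)]
    (Y Z : Ω → ℝ) (Zk : ℕ → Ω → ℝ) (F : ℝ → ℝ → ℝ) (f : ℝ → ℝ) (L : NNReal)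
    (hY : Measurable Y) (hZ : Measurable Z) (hZk : ∀ k, Measurable (Zk k))
    (hF : Measurable fun p : ℝ × ℝ => F p.1 p.2)
    (hf : LipschitzWith L f)
    -- the `Z_k` together with `Y` form an independent family
    (hindep : iIndepFun
      (fun i : Option ℕ => i.elim Y Zk) ℙ)
    -- each `Z_k` is a copy of `Z`
    (hid : ∀ k, IdentDistrib (Zk k) Z ℙ ℙ)
    -- `Z` is independent of `Y`
    (hZY : IndepFun Z Y ℙ)
    (hX : MemLp (fun ω => F (Z ω) (Y ω)) 2 ℙ)
    (hXk : ∀ k, MemLp (fun ω => F (Zk k ω) (Y ω)) 2 ℙ)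
    (K : ℕ) (hK : 1 ≤ K) :
    ∫ ω,
        (f ((ℙ[(fun ω' => F (Z ω') (Y ω')) | MeasurableSpace.comap Y inferInstance]) ω) -
            f ((K : ℝ)⁻¹ * ∑ k ∈ range K, F (Zk k ω) (Y ω))) ^ 2 ∂ℙ ≤
      (L : ℝ) ^ 2 / K *
        ((∫ ω, (F (Z ω) (Y ω)) ^ 2 ∂ℙ) -
          ∫ ω, ((ℙ[(fun ω' => F (Z ω') (Y ω')) | MeasurableSpace.comap Y inferInstance]) ω) ^ 2 ∂ℙ) := by
  have hmle : MeasurableSpace.comap Y inferInstance ≤ (inferInstance : MeasurableSpace Ω) :=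
    hY.comap_le
  set μY : Measure ℝ := Measure.map Y ℙ with hμYdef
  set μZ : Measure ℝ := Measure.map Z ℙ with hμZdef
  haveI : IsProbabilityMeasure μY := Measure.isProbabilityMeasure_map hY.aemeasurable
  haveI : IsProbabilityMeasure μZ := Measure.isProbabilityMeasure_map hZ.aemeasurable
  set g : ℝ → ℝ := fun y => ∫ z, F z y ∂μZ with hgdef
  have hg_sm : StronglyMeasurable g := hF.stronglyMeasurable.integral_prod_left'
  have hmapZk : ∀ k, Measure.map (Zk k) ℙ = μZ := fun k => (hid k).map_eq
  have hfmeas : ∀ i : Option ℕ, Measurable (i.elim Y Zk) := by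
    rintro (_ | k)
    · exact hY
    · exact hZk k
  have hZkY : ∀ k, IndepFun (Zk k) Y ℙ := by
    intro k
    have h := hindep.indepFun (i := some k) (j := none) (by simp)
    simpa using h
  have hlawZ : Measure.map (fun ω => (Z ω, Y ω)) ℙ = μZ.prod μY :=
    (indepFun_iff_map_prod_eq_prod_map_map hZ.aemeasurable hY.aemeasurable).mp hZY
  have hlawk : ∀ k, Measure.map (fun ω => (Zk k ω, Y ω)) ℙ = μZ.prod μY := by
    intro k
    rw [(indepFun_iff_map_prod_eq_prod_map_map (hZk k).aemeasurable hY.aemeasurable).mp (hZkY k),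
      hmapZk]
  -- L² membership of F on the product
  have hFL2 : MemLp (fun p : ℝ × ℝ => F p.1 p.2) 2 (μZ.prod μY) := by
    rw [← hlawZ]
    exact (memLp_map_measure_iff hF.aestronglyMeasurable
      (hZ.prodMk hY).aemeasurable).mpr hX
  have hFint : Integrable (fun p : ℝ × ℝ => F p.1 p.2) (μZ.prod μY) := hFL2.integrable one_le_two
  have hF2int : Integrable (fun p : ℝ × ℝ => F p.1 p.2 ^ 2) (μZ.prod μY) := hFL2.integrable_sq
  have hgint : Integrable g μY := hFint.integral_prod_right
  -- `g ∈ L²(μY)`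
  have hg2 : MemLp g 2 μY := by
    have hsec2 : ∀ᵐ y ∂μY, Integrable (fun z => F z y ^ 2) μZ :=
      Integrable.prod_left_ae (f := fun p : ℝ × ℝ => F p.1 p.2 ^ 2) hF2int
    have hgle : ∀ᵐ y ∂μY, ‖g y ^ 2‖ ≤ ∫ z, F z y ^ 2 ∂μZ := by
      filter_upwards [hsec2] with y h2
      have hsm : AEStronglyMeasurable (fun z => F z y) μZ :=
        (hF.comp (measurable_id.prodMk measurable_const)).aestronglyMeasurable
      have hmem : MemLp (fun z => F z y) 2 μZ :=
        (memLp_two_iff_integrable_sq hsm).mpr h2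
      have := sq_integral_le hmem
      rw [Real.norm_eq_abs, abs_of_nonneg (sq_nonneg _)]
      exact this
    refine (memLp_two_iff_integrable_sq hg_sm.aestronglyMeasurable).mpr ?_
    exact Integrable.mono'
      (Integrable.integral_prod_right (f := fun p : ℝ × ℝ => F p.1 p.2 ^ 2) hF2int)
      ((hg_sm.measurable.pow_const 2).aestronglyMeasurable) hgle
  have hgY2 : MemLp (fun ω => g (Y ω)) 2 ℙ :=
    (memLp_map_measure_iff hg_sm.aestronglyMeasurable hY.aemeasurable).mp hg2
  -- identification of the conditional expectation
  have hXint : Integrable (fun ω => F (Z ω) (Y ω)) ℙ := hX.integrable one_le_two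
  haveI : SigmaFinite ((ℙ : Measure Ω).trim hmle) := by infer_instance
  have hcond : (fun ω => g (Y ω)) =ᵐ[ℙ]
      ℙ[(fun ω' => F (Z ω') (Y ω')) | MeasurableSpace.comap Y inferInstance] := by
    refine ae_eq_condExp_of_forall_setIntegral_eq hmle hXint
      (fun s _ _ => (hgY2.integrable one_le_two).integrableOn) (fun s hs _ => ?_) ?_
    · obtain ⟨t, ht, rfl⟩ := hs
      have hL : ∫ ω in Y ⁻¹' t, g (Y ω) ∂ℙ = ∫ y in t, g y ∂μY :=
        (setIntegral_map ht hg_sm.aestronglyMeasurable hY.aemeasurable).symm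
      have hres : μZ.prod (μY.restrict t) = (μZ.prod μY).restrict (Set.univ ×ˢ t) := by
        rw [← Measure.prod_restrict, Measure.restrict_univ]
      have hR : ∫ ω in Y ⁻¹' t, F (Z ω) (Y ω) ∂ℙ
          = ∫ p in Set.univ ×ˢ t, F p.1 p.2 ∂(μZ.prod μY) := by
        rw [← hlawZ, setIntegral_map (MeasurableSet.univ.prod ht) hF.aestronglyMeasurable
          (hZ.aemeasurable.prodMk hY.aemeasurable)]
        congr 1
        simp [Set.mk_preimage_prod]
      have hR2 : ∫ p in Set.univ ×ˢ t, F p.1 p.2 ∂(μZ.prod μY) = ∫ y in t, g y ∂μY := by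
        have hint : Integrable (fun p : ℝ × ℝ => F p.1 p.2) (μZ.prod (μY.restrict t)) := by
          rw [hres]; exact hFint.integrableOn
        calc ∫ p in Set.univ ×ˢ t, F p.1 p.2 ∂(μZ.prod μY)
            = ∫ p, F p.1 p.2 ∂(μZ.prod (μY.restrict t)) := by rw [hres]
          _ = ∫ y, ∫ z, F z y ∂μZ ∂(μY.restrict t) :=
              integral_prod_symm (fun p : ℝ × ℝ => F p.1 p.2) hint
          _ = ∫ y in t, g y ∂μY := rfl
      rw [hL, hR, hR2]
    · have hYmY : @Measurable Ω ℝ (MeasurableSpace.comap Y inferInstance) _ Y :=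
        Measurable.of_comap_le le_rfl
      exact (hg_sm.comp_measurable hYmY).aestronglyMeasurable
  -- abbreviations for the two basic integrals
  set A : ℝ := ∫ ω, (F (Z ω) (Y ω)) ^ 2 ∂ℙ with hAdef
  set I2 : ℝ := ∫ y, g y ^ 2 ∂μY with hI2def
  have hgYsq : ∫ ω, g (Y ω) ^ 2 ∂ℙ = I2 := by
    rw [hI2def, hμYdef,
      integral_map hY.aemeasurable ((hg_sm.measurable.pow_const 2).aestronglyMeasurable)]
  have hm2 : ∫ ω, (ℙ[(fun ω' => F (Z ω') (Y ω')) | MeasurableSpace.comap Y inferInstance]) ω ^ 2 ∂ℙ = I2 := by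
    rw [← hgYsq]
    exact integral_congr_ae ((hcond.fun_comp (fun x : ℝ => x ^ 2)).symm)
  -- identically distributed squares
  have hpairid : ∀ k, IdentDistrib (fun ω => (Zk k ω, Y ω)) (fun ω => (Z ω, Y ω)) ℙ ℙ :=
    fun k => ⟨((hZk k).prodMk hY).aemeasurable, (hZ.prodMk hY).aemeasurable,
      by rw [hlawk, hlawZ]⟩
  have hXk2 : ∀ k, ∫ ω, (F (Zk k ω) (Y ω)) ^ 2 ∂ℙ = A := by
    intro k
    exact (((hpairid k).comp hF).comp (measurable_id.pow_const 2)).integral_eq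
  -- mixed term
  have hXkg : ∀ k, ∫ ω, F (Zk k ω) (Y ω) * g (Y ω) ∂ℙ = I2 := by
    intro k
    have hφm : AEStronglyMeasurable (fun p : ℝ × ℝ => F p.1 p.2 * g p.2) (μZ.prod μY) :=
      (hF.mul (hg_sm.measurable.comp measurable_snd)).aestronglyMeasurable
    have hgsnd : MemLp (fun p : ℝ × ℝ => g p.2) 2 (μZ.prod μY) := by
      have hmp : Measure.map (Prod.snd : ℝ × ℝ → ℝ) (μZ.prod μY) = μY := by
        rw [Measure.map_snd_prod]; simp
      have := (memLp_map_measure_iff hg_sm.aestronglyMeasurable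
        measurable_snd.aemeasurable (p := 2)).mp (by rw [hmp]; exact hg2)
      exact this
    have hφint : Integrable (fun p : ℝ × ℝ => F p.1 p.2 * g p.2) (μZ.prod μY) :=
      mul_int_of_memL2 hFL2 hgsnd
    calc ∫ ω, F (Zk k ω) (Y ω) * g (Y ω) ∂ℙ
        = ∫ p, F p.1 p.2 * g p.2 ∂(μZ.prod μY) := by
          rw [← hlawk k]
          exact (integral_map ((hZk k).prodMk hY).aemeasurable
            (by rw [hlawk k]; exact hφm)).symm
      _ = ∫ y, ∫ z, F z y * g y ∂μZ ∂μY :=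
          integral_prod_symm (fun p : ℝ × ℝ => F p.1 p.2 * g p.2) hφint
      _ = ∫ y, g y * g y ∂μY := by
          refine integral_congr_ae (Filter.Eventually.of_forall fun y => ?_)
          simp only [integral_mul_const]
          rfl
      _ = I2 := by rw [hI2def]; congr 1; funext y; ring
  -- the centered variables
  have hDL2 : ∀ k, MemLp (fun ω => F (Zk k ω) (Y ω) - g (Y ω)) 2 ℙ :=
    fun k => (hXk k).sub hgY2
  have hDDint : ∀ j k, Integrable
      (fun ω => (F (Zk j ω) (Y ω) - g (Y ω)) * (F (Zk k ω) (Y ω) - g (Y ω))) ℙ :=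
    fun j k => mul_int_of_memL2 (hDL2 j) (hDL2 k)
  -- zero mean of the centered kernel in the z variable
  have hzero : ∀ y : ℝ, ∫ z, (F z y - g y) ∂μZ = 0 := by
    intro y
    by_cases hyi : Integrable (fun z => F z y) μZ
    · rw [integral_sub hyi (integrable_const _), integral_const]
      simp [hgdef]
    · have h1 : ¬ Integrable (fun z => F z y - g y) μZ := by
        intro h
        exact hyi ((h.add (integrable_const (g y))).congr
          (Filter.Eventually.of_forall fun z => by simp))
      rw [integral_undef h1]
  -- cross terms vanish
  have hcross : ∀ j k, j ≠ k →
      ∫ ω, (F (Zk j ω) (Y ω) - g (Y ω)) * (F (Zk k ω) (Y ω) - g (Y ω)) ∂ℙ = 0 := by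
    intro j k hjk
    have hind3 : IndepFun (fun ω => (Zk k ω, Y ω)) (Zk j) ℙ := by
      have h := hindep.indepFun_prodMk hfmeas (some k) none (some j)
        (by simp [Ne.symm hjk]) (by simp)
      simpa using h
    have hlaw3 : Measure.map (fun ω => ((Zk k ω, Y ω), Zk j ω)) ℙ = (μZ.prod μY).prod μZ := by
      rw [(indepFun_iff_map_prod_eq_prod_map_map ((hZk k).prodMk hY).aemeasurable
        (hZk j).aemeasurable).mp hind3, hlawk, hmapZk]
    have hψm : AEStronglyMeasurable
        (fun q : (ℝ × ℝ) × ℝ => (F q.2 q.1.2 - g q.1.2) * (F q.1.1 q.1.2 - g q.1.2))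
        ((μZ.prod μY).prod μZ) := by
      refine Measurable.aestronglyMeasurable ?_
      exact ((hF.comp (measurable_snd.prodMk (measurable_fst.snd))).sub
          (hg_sm.measurable.comp measurable_fst.snd)).mul
        ((hF.comp (measurable_fst.fst.prodMk measurable_fst.snd)).sub
          (hg_sm.measurable.comp measurable_fst.snd))
    have htriple : AEMeasurable (fun ω => ((Zk k ω, Y ω), Zk j ω)) ℙ :=
      (((hZk k).prodMk hY).prodMk (hZk j)).aemeasurable
    have hψint : Integrable
        (fun q : (ℝ × ℝ) × ℝ => (F q.2 q.1.2 - g q.1.2) * (F q.1.1 q.1.2 - g q.1.2))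
        ((μZ.prod μY).prod μZ) := by
      rw [← hlaw3]
      refine (integrable_map_measure (by rw [hlaw3]; exact hψm) htriple).mpr ?_
      exact hDDint j k
    calc ∫ ω, (F (Zk j ω) (Y ω) - g (Y ω)) * (F (Zk k ω) (Y ω) - g (Y ω)) ∂ℙ
        = ∫ q, (F q.2 q.1.2 - g q.1.2) * (F q.1.1 q.1.2 - g q.1.2)
            ∂((μZ.prod μY).prod μZ) := by
          rw [← hlaw3]
          exact (integral_map htriple (by rw [hlaw3]; exact hψm)).symm
      _ = ∫ p, ∫ z, (F z p.2 - g p.2) * (F p.1 p.2 - g p.2) ∂μZ ∂(μZ.prod μY) :=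
          integral_prod _ hψint
      _ = 0 := by
          have : ∀ p : ℝ × ℝ, ∫ z, (F z p.2 - g p.2) * (F p.1 p.2 - g p.2) ∂μZ = 0 := by
            intro p
            rw [integral_mul_const, hzero, zero_mul]
          simp_rw [this, integral_zero]
  -- diagonal terms
  have hdiag : ∀ k, ∫ ω, (F (Zk k ω) (Y ω) - g (Y ω)) ^ 2 ∂ℙ = A - I2 := by
    intro k
    have hXkgint : Integrable (fun ω => F (Zk k ω) (Y ω) * g (Y ω)) ℙ :=
      mul_int_of_memL2 (hXk k) hgY2
    have hpt : ∀ ω, (F (Zk k ω) (Y ω) - g (Y ω)) ^ 2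
        = (F (Zk k ω) (Y ω)) ^ 2 - 2 * (F (Zk k ω) (Y ω) * g (Y ω)) + g (Y ω) ^ 2 :=
      fun ω => by ring
    have h1 : Integrable (fun ω => (F (Zk k ω) (Y ω)) ^ 2
        - 2 * (F (Zk k ω) (Y ω) * g (Y ω))) ℙ :=
      (hXk k).integrable_sq.sub (hXkgint.const_mul 2)
    simp_rw [hpt]
    rw [integral_add h1 hgY2.integrable_sq,
      integral_sub (hXk k).integrable_sq (hXkgint.const_mul 2), integral_const_mul,
      hXk2 k, hXkg k, hgYsq]
    ring
  -- variance of the empirical mean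
  have hKne : (K : ℝ) ≠ 0 := Nat.cast_ne_zero.mpr (by omega)
  have hSvar : ∫ ω, (g (Y ω) - (K : ℝ)⁻¹ * ∑ k ∈ range K, F (Zk k ω) (Y ω)) ^ 2 ∂ℙ
      = (A - I2) / K := by
    have hpt : ∀ ω, (g (Y ω) - (K : ℝ)⁻¹ * ∑ k ∈ range K, F (Zk k ω) (Y ω)) ^ 2
        = ((K : ℝ)⁻¹) ^ 2 *
          ∑ j ∈ range K, ∑ k ∈ range K,
            (F (Zk j ω) (Y ω) - g (Y ω)) * (F (Zk k ω) (Y ω) - g (Y ω)) := by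
      intro ω
      rw [← Finset.sum_mul_sum]
      have hsum : ∑ k ∈ range K, (F (Zk k ω) (Y ω) - g (Y ω))
          = (∑ k ∈ range K, F (Zk k ω) (Y ω)) - K * g (Y ω) := by
        rw [Finset.sum_sub_distrib, Finset.sum_const, Finset.card_range, nsmul_eq_mul]
      rw [hsum]
      field_simp
      ring
    simp_rw [hpt]
    rw [integral_const_mul, integral_finset_sum _ (fun j _ =>
      integrable_finset_sum _ (fun k _ => hDDint j k))]
    have hsum2 : ∀ j ∈ range K,
        ∫ ω, ∑ k ∈ range K,
            (F (Zk j ω) (Y ω) - g (Y ω)) * (F (Zk k ω) (Y ω) - g (Y ω)) ∂ℙ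
          = A - I2 := by
      intro j hj
      rw [integral_finset_sum _ (fun k _ => hDDint j k)]
      have : ∀ k ∈ range K,
          ∫ ω, (F (Zk j ω) (Y ω) - g (Y ω)) * (F (Zk k ω) (Y ω) - g (Y ω)) ∂ℙ
            = if k = j then A - I2 else 0 := by
        intro k _
        by_cases hkj : k = j
        · subst hkj
          simpa [sq] using hdiag k
        · rw [if_neg hkj]
          exact hcross j k (fun h => hkj h.symm)
      rw [Finset.sum_congr rfl this, Finset.sum_ite_eq' (range K) j (fun _ => A - I2),
        if_pos hj]
    rw [Finset.sum_congr rfl hsum2, Finset.sum_const, Finset.card_range, nsmul_eq_mul]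
    field_simp
  -- Lipschitz bound and conclusion
  set m : Ω → ℝ := ℙ[(fun ω' => F (Z ω') (Y ω')) | MeasurableSpace.comap Y inferInstance] with hmdef
  set S : Ω → ℝ := fun ω => (K : ℝ)⁻¹ * ∑ k ∈ range K, F (Zk k ω) (Y ω) with hSdef
  have hSL2 : MemLp S 2 ℙ := by
    have : MemLp (fun ω => ∑ k ∈ range K, F (Zk k ω) (Y ω)) 2 ℙ :=
      memLp_finset_sum (range K) (fun k _ => hXk k)
    exact this.const_mul _
  have hgYSL2 : MemLp (fun ω => g (Y ω) - S ω) 2 ℙ := hgY2.sub hSL2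
  have hRint : Integrable (fun ω => (L : ℝ) ^ 2 * (g (Y ω) - S ω) ^ 2) ℙ :=
    hgYSL2.integrable_sq.const_mul _
  have hRint' : Integrable (fun ω => (L : ℝ) ^ 2 * (m ω - S ω) ^ 2) ℙ := by
    refine hRint.congr ?_
    filter_upwards [hcond] with ω hω
    rw [hω]
  have hptw : ∀ ω, (f (m ω) - f (S ω)) ^ 2 ≤ (L : ℝ) ^ 2 * (m ω - S ω) ^ 2 := by
    intro ω
    have h := hf.dist_le_mul (m ω) (S ω)
    rw [Real.dist_eq, Real.dist_eq] at h
    calc (f (m ω) - f (S ω)) ^ 2 = |f (m ω) - f (S ω)| ^ 2 := (sq_abs _).symm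
      _ ≤ ((L : ℝ) * |m ω - S ω|) ^ 2 := by
          refine pow_le_pow_left₀ (abs_nonneg _) h 2
      _ = (L : ℝ) ^ 2 * (m ω - S ω) ^ 2 := by rw [mul_pow, sq_abs]
  have step1 : ∫ ω, (f (m ω) - f (S ω)) ^ 2 ∂ℙ ≤ ∫ ω, (L : ℝ) ^ 2 * (m ω - S ω) ^ 2 ∂ℙ :=
    integral_mono_of_nonneg (Filter.Eventually.of_forall fun ω => sq_nonneg _)
      hRint' (Filter.Eventually.of_forall hptw)
  have step2 : ∫ ω, (L : ℝ) ^ 2 * (m ω - S ω) ^ 2 ∂ℙ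
      = (L : ℝ) ^ 2 * ((A - I2) / K) := by
    have he : (fun ω => (L : ℝ) ^ 2 * (m ω - S ω) ^ 2)
        =ᵐ[ℙ] fun ω => (L : ℝ) ^ 2 * (g (Y ω) - S ω) ^ 2 := by
      filter_upwards [hcond] with ω hω
      rw [hω]
    rw [integral_congr_ae he, integral_const_mul, hSvar]
  rw [hm2]
  calc ∫ ω, (f (m ω) - f (S ω)) ^ 2 ∂ℙ ≤ (L : ℝ) ^ 2 * ((A - I2) / K) :=
        step1.trans_eq step2
    _ = (L : ℝ) ^ 2 / K * (A - I2) := by ring
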